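/- Let P ⊂ ℂ be a non-degenerate convex polygon with M vertices (the convex hull of M points, having nonempty interior) that contains the origin. Let t be a complex number with Im(t) ≠ 0 and Re(t) > 0 such that tP ⊆ P (P is invariant under multiplication by t). Set η = |arctan((1 − Re(t)) / Im(t))| and assume η ≤ 1. Then M ≥ 2π/(3η). -/

import Mathlib

open Real Set

lemma tangent_log_cos {a x : ℝ} (ha : a ∈ Ioo (-(π/2)) (π/2)) (hx : x ∈ Ioo (-(π/2)) (π/2)) :
    Real.log (Real.cos x) ≤ Real.log (Real.cos a) - (x - a) * Real.tan a := by
  have hderiv : ∀ y ∈ Ioo (-(π/2)) (π/2),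
      HasDerivAt (fun z => Real.log (Real.cos z)) (-Real.tan y) y := by
    intro y hy
    have hcos : Real.cos y ≠ 0 := ne_of_gt (Real.cos_pos_of_mem_Ioo hy)
    have := (Real.hasDerivAt_cos y).log hcos
    simpa [Real.tan_eq_sin_div_cos, neg_div] using this
  have hcont : ∀ u v : ℝ, u ∈ Ioo (-(π/2)) (π/2) → v ∈ Ioo (-(π/2)) (π/2) →
      ContinuousOn (fun z => Real.log (Real.cos z)) (Icc u v) := by
    intro u v hu hv z hz
    have hz' : z ∈ Ioo (-(π/2)) (π/2) := ⟨lt_of_lt_of_le hu.1 hz.1, lt_of_le_of_lt hz.2 hv.2⟩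
    exact ((hderiv z hz').continuousAt).continuousWithinAt
  rcases lt_trichotomy a x with h | h | h
  · obtain ⟨c, hc, hcs⟩ := exists_hasDerivAt_eq_slope (fun z => Real.log (Real.cos z))
      (fun y => -Real.tan y) h (hcont a x ha hx)
      (fun y hy => hderiv y ⟨lt_trans ha.1 hy.1, lt_trans hy.2 hx.2⟩)
    have hxa : x - a ≠ 0 := by linarith
    have hslope : Real.log (Real.cos x) - Real.log (Real.cos a) = -Real.tan c * (x - a) := by
      rw [eq_comm] at hcs
      exact (div_eq_iff hxa).mp hcs
    have htan : Real.tan a ≤ Real.tan c :=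
      le_of_lt (Real.tan_lt_tan_of_lt_of_lt_pi_div_two ha.1 (lt_trans hc.2 hx.2) hc.1)
    nlinarith [sub_pos.mpr h]
  · subst h; simp
  · obtain ⟨c, hc, hcs⟩ := exists_hasDerivAt_eq_slope (fun z => Real.log (Real.cos z))
      (fun y => -Real.tan y) h (hcont x a hx ha)
      (fun y hy => hderiv y ⟨lt_trans hx.1 hy.1, lt_trans hy.2 ha.2⟩)
    have hxa : a - x ≠ 0 := by linarith
    have hslope : Real.log (Real.cos a) - Real.log (Real.cos x) = -Real.tan c * (a - x) := by
      rw [eq_comm] at hcs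
      exact (div_eq_iff hxa).mp hcs
    have htan : Real.tan c ≤ Real.tan a :=
      le_of_lt (Real.tan_lt_tan_of_lt_of_lt_pi_div_two (lt_trans hx.1 hc.1) ha.2 hc.2)
    nlinarith [sub_pos.mpr h]

lemma cos_pos_rep {x : ℝ} (hx : 0 < Real.cos x) : ∃ k : ℤ, |x - k * (2*π)| < π/2 := by
  refine ⟨round (x / (2*π)), ?_⟩
  have h2pi : (0:ℝ) < 2*π := by positivity
  have hb : |x / (2*π) - round (x / (2*π))| ≤ 1/2 := abs_sub_round _
  set k := round (x / (2*π)) with hk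
  set d := x - k * (2*π) with hd
  have hdd : d = (x/(2*π) - k) * (2*π) := by
    rw [hd]; field_simp
  have hbound : |d| ≤ π := by
    rw [hdd, abs_mul, abs_of_pos h2pi]
    calc |x/(2*π) - (k:ℝ)| * (2*π) ≤ (1/2) * (2*π) :=
          mul_le_mul_of_nonneg_right hb (le_of_lt h2pi)
      _ = π := by ring
  by_contra hcon
  push_neg at hcon
  have hcos : Real.cos d = Real.cos x := Real.cos_sub_int_mul_two_pi x k
  have hneg : Real.cos d ≤ 0 := by
    rcases le_total 0 d with h | h
    · rw [abs_of_nonneg h] at hcon hbound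
      exact Real.cos_nonpos_of_pi_div_two_le_of_le hcon (by linarith [Real.pi_pos])
    · rw [abs_of_nonpos h] at hcon hbound
      rw [← Real.cos_neg]
      exact Real.cos_nonpos_of_pi_div_two_le_of_le hcon (by linarith [Real.pi_pos])
  linarith [hcos ▸ hneg]

lemma exists_cos_pos (γ : ℝ) {θ : ℝ} (hθ : 0 < θ) (hθ2 : θ < π/2) :
    ∃ k : ℕ, 0 < Real.cos (γ + k * θ) := by
  obtain ⟨m, hm⟩ := exists_nat_ge (γ / (2*π))
  have h2pi : (0:ℝ) < 2*π := by positivity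
  have hγm : γ ≤ 2*π*m := by
    have := (div_le_iff₀ h2pi).mp hm
    linarith
  set y : ℝ := 2*π*m - γ with hy
  have hy0 : 0 ≤ y := by linarith
  obtain ⟨k, hk1, hk2⟩ : ∃ k : ℕ, y ≤ k * θ ∧ k * θ < y + θ := by
    have hcnn : (0:ℤ) ≤ ⌈y/θ⌉ := Int.ceil_nonneg (by positivity)
    refine ⟨⌈y / θ⌉.toNat, ?_, ?_⟩
    · have h1 : (y/θ : ℝ) ≤ (⌈y/θ⌉ : ℝ) := Int.le_ceil _
      have h2 : ((⌈y/θ⌉.toNat : ℕ) : ℝ) = ((⌈y/θ⌉ : ℤ) : ℝ) := by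
        rw [← Int.toNat_of_nonneg hcnn]; push_cast; rw [Int.toNat_of_nonneg hcnn]
      have h3 : (y/θ) * θ ≤ (⌈y/θ⌉.toNat : ℝ) * θ := by
        apply mul_le_mul_of_nonneg_right _ (le_of_lt hθ)
        rw [h2]; exact h1
      calc y = (y/θ)*θ := by field_simp
        _ ≤ _ := h3
    · have h1 : (⌈y/θ⌉ : ℝ) < y/θ + 1 := Int.ceil_lt_add_one _
      have h2 : ((⌈y/θ⌉.toNat : ℕ) : ℝ) = ((⌈y/θ⌉ : ℤ) : ℝ) := by
        rw [← Int.toNat_of_nonneg hcnn]; push_cast; rw [Int.toNat_of_nonneg hcnn]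
      have h3 : (⌈y/θ⌉.toNat : ℝ) * θ < (y/θ + 1) * θ := by
        apply mul_lt_mul_of_pos_right _ hθ
        rw [h2]; exact h1
      calc (⌈y/θ⌉.toNat : ℝ) * θ < (y/θ+1)*θ := h3
        _ = y + θ := by field_simp
  refine ⟨k, ?_⟩
  have hrw : γ + k*θ = (γ + k*θ - 2*π*m) + (m:ℤ)*(2*π) := by push_cast; ring
  rw [hrw, Real.cos_add_int_mul_two_pi]
  apply Real.cos_pos_of_mem_Ioo
  constructor
  · have : (0:ℝ) ≤ γ + k*θ - 2*π*m := by linarith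
    linarith [Real.pi_pos]
  · linarith

lemma trig_combo (a b x R I : ℝ) :
    Real.sin (b-a) * (R * Real.cos x + I * Real.sin x)
      = Real.sin (b-x) * (R * Real.cos a + I * Real.sin a)
        + Real.sin (x-a) * (R * Real.cos b + I * Real.sin b) := by
  simp only [Real.sin_sub]
  ring

lemma endgame {N : ℕ} {η : ℝ} (hη0 : 0 < η) (hη1 : η ≤ 1)
    (pp qq : ℕ → ℝ)
    (hpm : ∀ i < N, |pp i| < π/2) (hqm : ∀ i < N, |qq i| < π/2)
    (hqη : ∀ i < N, qq i ≤ η)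
    (hw : ∀ i < N, 0 ≤ pp i + qq i)
    (hsum : ∑ i ∈ Finset.range N, (pp i + qq i) = 2*π)
    (hlog : ∑ i ∈ Finset.range N, Real.log (Real.cos (pp i))
            = ∑ i ∈ Finset.range N, Real.log (Real.cos (qq i))) :
    2*π ≤ 2*N*η := by
  have hpi3 : (3:ℝ) < π := Real.pi_gt_three
  have hη2 : η < π/2 := by linarith
  have hηIoo : η ∈ Ioo (-(π/2)) (π/2) := ⟨by linarith, hη2⟩
  have htanη : 0 < Real.tan η := Real.tan_pos_of_pos_of_lt_pi_div_two hη0 hη2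
  have key : ∀ i < N, (pp i + qq i - 2*η) * Real.tan η
      ≤ Real.log (Real.cos (qq i)) - Real.log (Real.cos (pp i)) := by
    intro i hi
    have hpIoo : pp i ∈ Ioo (-(π/2)) (π/2) := abs_lt.mp (hpm i hi) |>.imp id id |> fun h => ⟨h.1, h.2⟩
    have hqIoo : qq i ∈ Ioo (-(π/2)) (π/2) := abs_lt.mp (hqm i hi) |>.imp id id |> fun h => ⟨h.1, h.2⟩
    rcases le_or_gt (-η) (qq i) with hG | hB
    · -- good case : |qq i| ≤ η
      have h1 : Real.log (Real.cos (pp i))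
          ≤ Real.log (Real.cos η) - (pp i - η) * Real.tan η := tangent_log_cos hηIoo hpIoo
      have hcosq : Real.cos η ≤ Real.cos (qq i) := by
        rw [← Real.cos_abs (qq i)]
        apply Real.cos_le_cos_of_nonneg_of_le_pi (abs_nonneg _) (by linarith)
        exact abs_le.mpr ⟨hG, hqη i hi⟩
      have h2 : Real.log (Real.cos η) ≤ Real.log (Real.cos (qq i)) :=
        Real.log_le_log (Real.cos_pos_of_mem_Ioo hηIoo) hcosq
      have h3 : (pp i + qq i - 2*η) * Real.tan η ≤ (pp i - η) * Real.tan η := by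
        apply mul_le_mul_of_nonneg_right _ (le_of_lt htanη)
        have := hqη i hi
        linarith
      linarith
    · -- bad case : qq i < -η
      have haIoo : -qq i ∈ Ioo (-(π/2)) (π/2) := ⟨by linarith [hqIoo.2], by linarith [hqIoo.1]⟩
      have h1 : Real.log (Real.cos (pp i))
          ≤ Real.log (Real.cos (-qq i)) - (pp i - (-qq i)) * Real.tan (-qq i) :=
        tangent_log_cos haIoo hpIoo
      rw [Real.cos_neg] at h1
      have htm : Real.tan η ≤ Real.tan (-qq i) := by
        apply le_of_lt
        exact Real.tan_lt_tan_of_lt_of_lt_pi_div_two (by linarith) haIoo.2 (by linarith)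
      have hwi := hw i hi
      have h2 : (pp i + qq i) * Real.tan η ≤ (pp i + qq i) * Real.tan (-qq i) :=
        mul_le_mul_of_nonneg_left htm hwi
      nlinarith
  have hsum2 : ∑ i ∈ Finset.range N, (pp i + qq i - 2*η) * Real.tan η
      ≤ ∑ i ∈ Finset.range N, (Real.log (Real.cos (qq i)) - Real.log (Real.cos (pp i))) := by
    apply Finset.sum_le_sum
    intro i hi
    exact key i (Finset.mem_range.mp hi)
  rw [Finset.sum_sub_distrib, ← hlog, sub_self] at hsum2
  have hsum3 : ∑ i ∈ Finset.range N, (pp i + qq i - 2*η) * Real.tan η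
      = (2*π - 2*N*η) * Real.tan η := by
    rw [← Finset.sum_mul]
    congr 1
    rw [Finset.sum_sub_distrib, hsum]
    simp [Finset.sum_const, Finset.card_range]
    ring
  rw [hsum3] at hsum2
  nlinarith

noncomputable def gfun {M : ℕ} (p : Fin M → ℂ) (j : Fin M) (φ : ℝ) : ℝ :=
  (p j).re * Real.cos φ + (p j).im * Real.sin φ

def Act {M : ℕ} (p : Fin M → ℂ) (j : Fin M) (φ : ℝ) : Prop :=
  ∀ k, gfun p k φ ≤ gfun p j φ

lemma gfun_continuous {M : ℕ} (p : Fin M → ℂ) (j : Fin M) : Continuous (gfun p j) :=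
  ((continuous_const.mul Real.continuous_cos).add (continuous_const.mul Real.continuous_sin))

lemma gfun_periodic {M : ℕ} (p : Fin M → ℂ) (j : Fin M) (φ : ℝ) :
    gfun p j (φ + 2*π) = gfun p j φ := by
  unfold gfun
  rw [Real.cos_add_two_pi, Real.sin_add_two_pi]

lemma gfun_antiperiodic {M : ℕ} (p : Fin M → ℂ) (j : Fin M) (φ : ℝ) :
    gfun p j (φ + π) = -gfun p j φ := by
  unfold gfun
  rw [Real.cos_add_pi, Real.sin_add_pi]
  ring

lemma act_exists {M : ℕ} (p : Fin M → ℂ) (hM : 0 < M) (φ : ℝ) : ∃ j, Act p j φ := by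
  obtain ⟨j, -, hj⟩ := Finset.exists_max_image (Finset.univ : Finset (Fin M))
    (fun k => gfun p k φ) ⟨⟨0, hM⟩, Finset.mem_univ _⟩
  exact ⟨j, fun k => hj k (Finset.mem_univ k)⟩

lemma act_eq {M : ℕ} {p : Fin M → ℂ} {j j' : Fin M} {φ : ℝ}
    (h : Act p j φ) (h' : Act p j' φ) : gfun p j φ = gfun p j' φ :=
  le_antisymm (h' j) (h j')

lemma act_periodic {M : ℕ} {p : Fin M → ℂ} {j : Fin M} {φ : ℝ}
    (h : Act p j (φ + 2*π)) : Act p j φ := by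
  intro k
  have := h k
  rwa [gfun_periodic, gfun_periodic] at this

lemma act_periodic' {M : ℕ} {p : Fin M → ℂ} {j : Fin M} {φ : ℝ}
    (h : Act p j φ) : Act p j (φ + 2*π) := by
  intro k
  rw [gfun_periodic, gfun_periodic]
  exact h k

lemma act_isClosed {M : ℕ} (p : Fin M → ℂ) (j : Fin M) : IsClosed {φ | Act p j φ} := by
  have : {φ | Act p j φ} = ⋂ k, {φ | gfun p k φ ≤ gfun p j φ} := by
    ext φ; simp [Act, Set.mem_iInter]
  rw [this]
  exact isClosed_iInter fun k => isClosed_le (gfun_continuous p k) (gfun_continuous p j)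

lemma act_between {M : ℕ} {p : Fin M → ℂ} {j : Fin M} {a b x : ℝ}
    (ha : Act p j a) (hb : Act p j b) (hax : a ≤ x) (hxb : x ≤ b) (hw : b - a < π) :
    Act p j x := by
  rcases eq_or_lt_of_le (le_trans hax hxb) with heq | hab
  · have : a = x := le_antisymm hax (heq ▸ hxb)
    exact this ▸ ha
  intro k
  have hsin : 0 < Real.sin (b - a) := Real.sin_pos_of_pos_of_lt_pi (by linarith) hw
  have h1 : 0 ≤ Real.sin (b - x) := Real.sin_nonneg_of_nonneg_of_le_pi (by linarith) (by linarith)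
  have h2 : 0 ≤ Real.sin (x - a) := Real.sin_nonneg_of_nonneg_of_le_pi (by linarith) (by linarith)
  have hcombo : ∀ (m : Fin M), Real.sin (b-a) * gfun p m x
      = Real.sin (b-x) * gfun p m a + Real.sin (x-a) * gfun p m b := by
    intro m
    exact trig_combo a b x (p m).re (p m).im
  have hineq : Real.sin (b-a) * gfun p k x ≤ Real.sin (b-a) * gfun p j x := by
    rw [hcombo k, hcombo j]
    have := ha k
    have := hb k
    apply add_le_add
    · exact mul_le_mul_of_nonneg_left (ha k) h1
    · exact mul_le_mul_of_nonneg_left (hb k) h2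
  exact le_of_mul_le_mul_left hineq hsin

lemma act_no_antipodal {M : ℕ} {p : Fin M → ℂ} {j : Fin M} {a : ℝ}
    (hpos : ∀ (φ:ℝ) (j : Fin M), Act p j φ → 0 < gfun p j φ)
    (ha : Act p j a) (hb : Act p j (a + π)) : False := by
  have h1 := hpos a j ha
  have h2 := hpos (a+π) j hb
  rw [gfun_antiperiodic] at h2
  linarith

lemma act_step {M : ℕ} {p : Fin M → ℂ} {j : Fin M} {x : ℝ}
    (hpos : ∀ (φ:ℝ) (j : Fin M), Act p j φ → 0 < gfun p j φ)
    (hx : Act p j x) :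
    ∃ d, 0 ≤ d ∧ d < π ∧ (∀ y, x ≤ y → y ≤ x + d → Act p j y) ∧
      (∀ e, d < e → e < π → ¬ Act p j (x + e)) := by
  set D : Set ℝ := Icc 0 π ∩ (fun d => x + d) ⁻¹' {φ | Act p j φ} with hD
  have hDne : D.Nonempty := ⟨0, ⟨le_refl 0, le_of_lt Real.pi_pos⟩, by simpa using hx⟩
  have hDclosed : IsClosed D :=
    isClosed_Icc.inter ((act_isClosed p j).preimage (continuous_const.add continuous_id))
  have hDcompact : IsCompact D :=
    (isCompact_Icc).inter_right ((act_isClosed p j).preimage (continuous_const.add continuous_id))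
  have hsup_mem : sSup D ∈ D := hDcompact.sSup_mem hDne
  set d := sSup D with hd
  have hd0 : 0 ≤ d := hsup_mem.1.1
  have hdπ : d ≤ π := hsup_mem.1.2
  have hdact : Act p j (x + d) := hsup_mem.2
  have hdlt : d < π := by
    rcases lt_or_eq_of_le hdπ with h | h
    · exact h
    · exact absurd (h ▸ hdact) (fun hc => act_no_antipodal hpos hx hc)
  refine ⟨d, hd0, hdlt, ?_, ?_⟩
  · intro y hy1 hy2
    exact act_between hx hdact hy1 (by linarith) (by linarith)
  · intro e he1 he2 hcon
    have heD : e ∈ D := ⟨⟨by linarith, le_of_lt he2⟩, hcon⟩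
    have : e ≤ d := le_csSup (hDcompact.bddAbove) heD
    linarith

lemma act_next {M : ℕ} {p : Fin M → ℂ} (hM : 0 < M) (x : ℝ) :
    ∃ (j : Fin M) (d : ℝ), 0 < d ∧ d < π ∧ (∀ y, x ≤ y → y ≤ x + d → Act p j y) := by
  have hπ : (1:ℝ) < π := by linarith [Real.pi_gt_three]
  set f : ℕ → Fin M := fun n => Classical.choose (act_exists p hM (x + 1/(n+1))) with hf
  have hfspec : ∀ n : ℕ, Act p (f n) (x + 1/(n+1)) :=
    fun n => Classical.choose_spec (act_exists p hM (x + 1/(n+1)))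
  obtain ⟨j, hj⟩ := Finite.exists_infinite_fiber f
  have hS : (f ⁻¹' {j}).Infinite := Set.infinite_coe_iff.mp hj
  -- j is active at x
  have hjx : Act p j x := by
    have hmem : x ∈ closure {φ | Act p j φ} := by
      rw [Metric.mem_closure_iff]
      intro ε hε
      obtain ⟨n, hn, hn2⟩ := hS.exists_gt ⌈1/ε⌉₊
      have hact : Act p j (x + 1/(n+1)) := by
        have := hfspec n
        rwa [show f n = j from hn] at this
      refine ⟨x + 1/(n+1), hact, ?_⟩
      have h1 : (0:ℝ) < (n:ℝ) + 1 := by positivity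
      have h2 : (1:ℝ)/ε ≤ (⌈1/ε⌉₊:ℝ) := Nat.le_ceil _
      have h3 : ((⌈1/ε⌉₊:ℕ):ℝ) < (n:ℝ) + 1 := by
        have : ⌈1/ε⌉₊ < n + 1 := Nat.lt_succ_of_lt hn2
        exact_mod_cast this
      have h4 : 1/ε < (n:ℝ)+1 := lt_of_le_of_lt h2 h3
      have h5 : 1/((n:ℝ)+1) < ε := by
        rw [div_lt_iff₀ h1]
        rw [div_lt_iff₀ hε] at h4
        nlinarith
      rw [Real.dist_eq]
      have heq : x - (x + 1/((n:ℝ)+1)) = -(1/((n:ℝ)+1)) := by ring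
      rw [heq, abs_neg, abs_of_pos (by positivity)]
      exact h5
    rwa [(act_isClosed p j).closure_eq] at hmem
  obtain ⟨n₀, hn₀⟩ := hS.nonempty
  have hact : Act p j (x + 1/(n₀+1)) := by
    have := hfspec n₀
    rwa [show f n₀ = j from hn₀] at this
  have hd1 : (0:ℝ) < 1/((n₀:ℝ)+1) := by positivity
  have hd2 : (1:ℝ)/((n₀:ℝ)+1) ≤ 1 := by
    rw [div_le_one (by positivity)]
    push_cast
    linarith [Nat.cast_nonneg (α := ℝ) n₀]
  refine ⟨j, 1/((n₀:ℝ)+1), hd1, by linarith, ?_⟩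
  intro y h1 h2
  exact act_between hjx hact h1 h2 (by linarith)

lemma act_seq {M : ℕ} {p : Fin M → ℂ} (hM : 0 < M)
    (hpos : ∀ (φ:ℝ) (j : Fin M), Act p j φ → 0 < gfun p j φ) :
    ∃ (N : ℕ) (s : ℕ → ℝ) (idx : ℕ → Fin M),
      1 ≤ N ∧ N ≤ M + 1 ∧ s 0 = 0 ∧
      (∀ i, s i < s (i+1)) ∧
      (∀ i, s (i+1) - s i < π) ∧
      (∀ i, ∀ y, s i ≤ y → y ≤ s (i+1) → Act p (idx i) y) ∧
      (∀ i, i < N → s i < 2*π) ∧ 2*π ≤ s N := by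
  have hQ : ∀ x : ℝ, ∃ yj : ℝ × Fin M, x < yj.1 ∧ yj.1 - x < π ∧
      (∀ z, x ≤ z → z ≤ yj.1 → Act p yj.2 z) ∧
      (∀ e, yj.1 < e → e - x < π → ¬ Act p yj.2 e) := by
    intro x
    obtain ⟨j, d, hd, hdπ, hactd⟩ := act_next hM x
    obtain ⟨d', h0', hπ', hall, hmax'⟩ := act_step hpos (hactd x le_rfl (by linarith))
    have hdd' : d ≤ d' := by
      by_contra hcc
      push_neg at hcc
      exact hmax' d hcc hdπ (hactd (x+d) (by linarith) le_rfl)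
    refine ⟨(x + d', j), by simp; linarith, by simp; linarith, ?_, ?_⟩
    · intro z h1 h2
      exact hall z h1 (by simpa using h2)
    · intro e he1 he2
      have := hmax' (e - x) (by simp at he1; linarith) (by linarith)
      rwa [show x + (e-x) = e by ring] at this
  choose nextF hQ1 hQ2 hQ3 hQ4 using hQ
  set s : ℕ → ℝ := fun n => Nat.rec (motive := fun _ => ℝ) (0:ℝ) (fun _ x => (nextF x).1) n
    with hs
  set idx : ℕ → Fin M := fun n => (nextF (s n)).2 with hidx
  have hs0 : s 0 = 0 := rfl
  have hssucc : ∀ n, s (n+1) = (nextF (s n)).1 := fun n => rfl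
  have hmono : ∀ i, s i < s (i+1) := fun i => by rw [hssucc]; exact hQ1 (s i)
  have hwidth : ∀ i, s (i+1) - s i < π := fun i => by rw [hssucc]; exact hQ2 (s i)
  have hact : ∀ i, ∀ y, s i ≤ y → y ≤ s (i+1) → Act p (idx i) y := by
    intro i y h1 h2
    rw [hssucc] at h2
    exact hQ3 (s i) y h1 h2
  have hmax : ∀ i, ∀ e, s (i+1) < e → e - s i < π → ¬ Act p (idx i) e := by
    intro i e h1 h2
    rw [hssucc] at h1
    exact hQ4 (s i) e h1 h2
  have hstrict : StrictMono s := strictMono_nat_of_lt_succ hmono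
  have hnonneg : ∀ i, 0 ≤ s i := by
    intro i
    have : s 0 ≤ s i := hstrict.monotone (Nat.zero_le i)
    rwa [hs0] at this
  have hreuse : ∀ n m, n < m → idx n = idx m → s n + 2*π ≤ s (m+1) := by
    intro n m hnm heq
    have hb : s n + π ≤ s (m+1) := by
      by_contra hcon
      push_neg at hcon
      have h1 : s (n+1) ≤ s m := hstrict.monotone (Nat.succ_le_of_lt hnm)
      have h3 : Act p (idx n) (s (m+1)) := by
        rw [heq]; exact hact m (s (m+1)) (le_of_lt (hmono m)) le_rfl
      exact hmax n (s (m+1)) (by linarith [hmono m]) (by linarith) h3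
    by_contra hcon
    push_neg at hcon
    have hActb : Act p (idx n) (s n + 2*π) :=
      act_periodic' (hact n (s n) le_rfl (le_of_lt (hmono n)))
    have hα : Act p (idx n) (s (m+1)) := by
      rw [heq]; exact hact m _ (le_of_lt (hmono m)) le_rfl
    have hgap : s n + 2*π - s (m+1) ≤ π := by linarith
    rcases lt_or_eq_of_le hgap with hlt | heqπ
    · set δ := min (s n + 2*π - s (m+1)) ((π - (s (m+1) - s m))/2) with hδ
      have hδpos : 0 < δ := lt_min (by linarith) (by linarith [hwidth m])
      have hm1 := min_le_left (s n + 2*π - s (m+1)) ((π - (s (m+1) - s m))/2)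
      have hm2 := min_le_right (s n + 2*π - s (m+1)) ((π - (s (m+1) - s m))/2)
      have hδ1 : s (m+1) + δ ≤ s n + 2*π := by linarith
      have hδ2 : (s (m+1) + δ) - s m < π := by linarith [hwidth m]
      have hx₀ : Act p (idx n) (s (m+1) + δ) :=
        act_between hα hActb (by linarith) hδ1 (by linarith)
      rw [heq] at hx₀
      exact hmax m (s (m+1) + δ) (by linarith) hδ2 hx₀
    · have hbe : s n + 2*π = s (m+1) + π := by linarith
      exact act_no_antipodal hpos hα (hbe ▸ hActb)
  have hreach : ∃ n, 2*π ≤ s n := by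
    by_contra hcon
    push_neg at hcon
    have hcard : (Finset.univ : Finset (Fin M)).card < (Finset.range (M+1)).card := by
      simp
    obtain ⟨a, ha, b, hb, hne, heq⟩ :=
      Finset.exists_ne_map_eq_of_card_lt_of_maps_to hcard
        (fun a _ => Finset.mem_univ (idx a))
    rcases lt_or_gt_of_ne hne with h | h
    · have := hreuse a b h heq
      have := hcon (b+1)
      linarith [hnonneg a]
    · have := hreuse b a h heq.symm
      have := hcon (a+1)
      linarith [hnonneg b]
  classical
  set N := Nat.find hreach with hN
  have hNspec : 2*π ≤ s N := Nat.find_spec hreach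
  have hNmin : ∀ i, i < N → s i < 2*π := by
    intro i hi
    have := Nat.find_min hreach hi
    linarith [lt_of_not_ge this]
  have hN1 : 1 ≤ N := by
    by_contra hc
    push_neg at hc
    interval_cases N
    · rw [hs0] at hNspec
      linarith [Real.pi_pos]
  have hNM : N ≤ M + 1 := by
    have hinj : Set.InjOn idx (Finset.range (N-1)) := by
      intro a ha b hb hab
      simp only [Finset.coe_range, Set.mem_Iio] at ha hb
      by_contra hne
      rcases lt_or_gt_of_ne hne with h | h
      · have := hreuse a b h hab
        have h2 : s (b+1) < 2*π := hNmin (b+1) (by omega)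
        linarith [hnonneg a]
      · have := hreuse b a h hab.symm
        have h2 : s (a+1) < 2*π := hNmin (a+1) (by omega)
        linarith [hnonneg b]
    have := Finset.card_le_card_of_injOn idx (fun a _ => Finset.mem_univ (idx a)) hinj
    simp [Finset.card_range] at this
    omega
  exact ⟨N, s, idx, hN1, hNM, hs0, hmono, hwidth, hact, hNmin, hNspec⟩

lemma fval (z : ℂ) (φ : ℝ) :
    z.re * Real.cos φ + z.im * Real.sin φ = (z * Complex.exp (-(φ:ℂ) * Complex.I)).re := by
  have hcast : -(φ:ℂ) = ((-φ : ℝ) : ℂ) := by push_cast; ring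
  rw [Complex.mul_re, hcast, Complex.exp_ofReal_mul_I_re, Complex.exp_ofReal_mul_I_im,
    Real.cos_neg, Real.sin_neg]
  ring

lemma re_scale_exp (r x : ℝ) : (((r:ℝ):ℂ) * Complex.exp ((x:ℝ) * Complex.I)).re
    = r * Real.cos x := by
  rw [Complex.mul_re, Complex.exp_ofReal_mul_I_re, Complex.exp_ofReal_mul_I_im]
  simp

lemma rot_re (w τ : ℂ) (k : ℕ) :
    (w * τ^k).re = ‖w‖ * (‖τ‖)^k
      * Real.cos (Complex.arg w + k * Complex.arg τ) := by
  conv_lhs => rw [← Complex.norm_mul_exp_arg_mul_I w, ← Complex.norm_mul_exp_arg_mul_I τ]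
  rw [mul_pow, ← Complex.exp_nat_mul]
  have h1 : ((k:ℂ)) * ((τ.arg:ℂ) * Complex.I) = ((k * τ.arg : ℝ) : ℂ) * Complex.I := by
    push_cast; ring
  rw [h1]
  have h2 : ((‖w‖ : ℝ):ℂ) * Complex.exp ((w.arg:ℝ) * Complex.I)
      * (((‖τ‖ ^ k : ℝ):ℂ) * Complex.exp (((k * τ.arg : ℝ):ℂ) * Complex.I))
      = ((‖w‖ * ‖τ‖ ^ k : ℝ) : ℂ)
        * Complex.exp (((w.arg + k * τ.arg : ℝ):ℂ) * Complex.I) := by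
    rw [Complex.ofReal_mul, Complex.ofReal_add]
    rw [show ((w.arg:ℂ) + ((k:ℝ) * τ.arg : ℝ)) * Complex.I
        = (w.arg:ℂ) * Complex.I + (((k * τ.arg : ℝ):ℂ)) * Complex.I by push_cast; ring]
    rw [Complex.exp_add]
    push_cast
    ring
  rw [show (((‖τ‖):ℂ))^k = (((‖τ‖ ^ k : ℝ)):ℂ) by push_cast; ring] at *
  rw [h2, re_scale_exp]

lemma hull_bound {M : ℕ} {p : Fin M → ℂ} {j : Fin M} {φ : ℝ} (hj : Act p j φ) :
    ∀ z ∈ convexHull ℝ (Set.range p),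
      z.re * Real.cos φ + z.im * Real.sin φ ≤ gfun p j φ := by
  intro z hz
  have hlin : IsLinearMap ℝ (fun w : ℂ => w.re * Real.cos φ + w.im * Real.sin φ) := by
    constructor
    · intro a b; simp only [Complex.add_re, Complex.add_im]; ring
    · intro c a
      simp only [Complex.smul_re, Complex.smul_im, smul_eq_mul]
      ring
  have hsub : Set.range p ⊆ {w : ℂ | w.re * Real.cos φ + w.im * Real.sin φ ≤ gfun p j φ} := by
    rintro _ ⟨k, rfl⟩; exact hj k
  exact convexHull_min hsub (convex_halfSpace_le hlin _) hz

lemma tan_abs_arctan (u : ℝ) : Real.tan |Real.arctan u| = |u| := by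
  rcases le_or_gt 0 u with h | h
  · have : 0 ≤ Real.arctan u := by
      rw [← Real.arctan_zero]
      exact Real.arctan_strictMono.monotone h
    rw [abs_of_nonneg this, Real.tan_arctan, abs_of_nonneg h]
  · have : Real.arctan u < 0 := by
      rw [← Real.arctan_zero]
      exact Real.arctan_strictMono h
    rw [abs_of_neg this, ← Real.arctan_neg, Real.tan_arctan, abs_of_neg h]

lemma support_pos {M : ℕ} {p : Fin M → ℂ} {P : Set ℂ} (hP : P = convexHull ℝ (Set.range p))
    (hint : (interior P).Nonempty) {t : ℂ} (him : 0 < t.im) (htre : 0 < t.re)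
    (hinv : ∀ z ∈ P, t * z ∈ P) :
    ∀ (φ:ℝ) (j : Fin M), Act p j φ → 0 < gfun p j φ := by
  -- a nonzero element of P
  obtain ⟨z₁, hz₁⟩ := hint
  have hz₀ : ∃ z₀ : ℂ, z₀ ∈ P ∧ z₀ ≠ 0 := by
    by_cases h : z₁ = 0
    · subst h
      obtain ⟨ε, hε, hball⟩ := Metric.isOpen_iff.mp isOpen_interior 0 hz₁
      refine ⟨((ε/2 : ℝ) : ℂ), ?_, ?_⟩
      · apply interior_subset
        apply hball
        simp only [Metric.mem_ball, dist_zero_right, Complex.norm_real, Real.norm_eq_abs]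
        rw [abs_of_pos (by linarith)]
        linarith
      · simp only [ne_eq, Complex.ofReal_eq_zero]
        linarith
    · exact ⟨z₁, interior_subset hz₁, h⟩
  obtain ⟨z₀, hz₀P, hz₀ne⟩ := hz₀
  have htne : t ≠ 0 := by
    intro h
    rw [h] at htre
    simp at htre
  have habs : 0 < ‖t‖ := norm_pos_iff.mpr htne
  -- the argument of t lies in (0, π/2)
  set θ := Complex.arg t with hθdef
  have hcosθ : 0 < Real.cos θ := by
    have h1 : ‖t‖ * Real.cos θ = t.re := Complex.norm_mul_cos_arg t
    nlinarith
  have hsinθ : 0 < Real.sin θ := by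
    have h1 : ‖t‖ * Real.sin θ = t.im := Complex.norm_mul_sin_arg t
    nlinarith
  have hθ1 : 0 < θ := by
    by_contra hcc
    push_neg at hcc
    have h1 : Real.sin (-θ) ≥ 0 :=
      Real.sin_nonneg_of_nonneg_of_le_pi (by linarith) (by linarith [Complex.neg_pi_lt_arg t])
    rw [Real.sin_neg] at h1
    linarith
  have hθ2 : θ < π/2 := by
    by_contra hcc
    push_neg at hcc
    have h1 : Real.cos θ ≤ 0 :=
      Real.cos_nonpos_of_pi_div_two_le_of_le hcc (by linarith [Complex.arg_le_pi t])
    linarith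
  -- iterates remain in P
  have hiter : ∀ k : ℕ, t^k * z₀ ∈ P := by
    intro k
    induction k with
    | zero => simpa using hz₀P
    | succ n ih =>
        have : t^(n+1) * z₀ = t * (t^n * z₀) := by ring
        rw [this]
        exact hinv _ ih
  intro φ j hj
  set w := z₀ * Complex.exp (-(φ:ℂ) * Complex.I) with hw
  have hwne : w ≠ 0 := mul_ne_zero hz₀ne (Complex.exp_ne_zero _)
  obtain ⟨k, hk⟩ := exists_cos_pos (Complex.arg w) hθ1 hθ2
  have hzP : t^k * z₀ ∈ P := hiter k
  have hle : (t^k * z₀).re * Real.cos φ + (t^k * z₀).im * Real.sin φ ≤ gfun p j φ := by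
    apply hull_bound hj
    rwa [← hP]
  have hcalc : (t^k * z₀).re * Real.cos φ + (t^k * z₀).im * Real.sin φ
      = ‖w‖ * (‖t‖)^k * Real.cos (Complex.arg w + k * θ) := by
    rw [fval, show t^k * z₀ * Complex.exp (-(φ:ℂ) * Complex.I) = w * t^k by rw [hw]; ring,
      rot_re]
  have hpos' : 0 < ‖w‖ * (‖t‖)^k * Real.cos (Complex.arg w + k * θ) := by
    apply mul_pos (mul_pos (norm_pos_iff.mpr hwne) (pow_pos habs k)) hk
  linarith [hcalc ▸ hle]

lemma arc_data {M : ℕ} {p : Fin M → ℂ} {P : Set ℂ} (hP : P = convexHull ℝ (Set.range p))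
    {t : ℂ} (him : 0 < t.im)
    (hinv : ∀ z ∈ P, t * z ∈ P)
    {η : ℝ} (hη2 : η < π/2) (hηnn : 0 ≤ η) (htanη : Real.tan η = |(1 - t.re)/t.im|)
    {j : Fin M} {a b : ℝ} (hab : a ≤ b) (hwid : b - a < π)
    (hA1 : Act p j a) (hA2 : Act p j b)
    (hga : 0 < gfun p j a) (hgb : 0 < gfun p j b) :
    ∃ PQ : ℝ × ℝ, |PQ.1| < π/2 ∧ |PQ.2| < π/2 ∧ PQ.2 ≤ η ∧ PQ.1 + PQ.2 = b - a ∧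
      Real.log (gfun p j a) = Real.log (‖p j‖) + Real.log (Real.cos PQ.1) ∧
      Real.log (gfun p j b) = Real.log (‖p j‖) + Real.log (Real.cos PQ.2) := by
  set v := p j with hv
  have hvne : v ≠ 0 := by
    intro h
    rw [show gfun p j a = v.re * Real.cos a + v.im * Real.sin a from rfl, h] at hga
    simp at hga
  have hvabs : 0 < ‖v‖ := norm_pos_iff.mpr hvne
  have hgv : ∀ φ:ℝ, gfun p j φ = ‖v‖ * Real.cos (φ - Complex.arg v) := by
    intro φ
    rw [show gfun p j φ = v.re * Real.cos φ + v.im * Real.sin φ from rfl, Real.cos_sub,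
      ← Complex.norm_mul_cos_arg v, ← Complex.norm_mul_sin_arg v]
    ring
  have hcosb : 0 < Real.cos (b - Complex.arg v) := by
    have := hgb
    rw [hgv b] at this
    nlinarith
  obtain ⟨k, hk⟩ := cos_pos_rep hcosb
  set A := Complex.arg v + k*(2*π) with hA
  set Q := b - A with hQdef
  set Pp := A - a with hPdef
  have hgA : ∀ φ:ℝ, gfun p j φ = ‖v‖ * Real.cos (φ - A) := by
    intro φ
    rw [hgv φ, hA, show φ - (Complex.arg v + (k:ℝ)*(2*π)) = (φ - Complex.arg v) - k*(2*π) by ring,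
      Real.cos_sub_int_mul_two_pi]
  have hQabs : |Q| < π/2 := by
    rw [hQdef, hA]
    rw [show b - (Complex.arg v + (k:ℝ)*(2*π)) = b - Complex.arg v - k*(2*π) by ring]
    exact hk
  have hcosQ : 0 < Real.cos Q := by
    rcases abs_lt.mp hQabs with ⟨h1, h2⟩
    exact Real.cos_pos_of_mem_Ioo ⟨h1, h2⟩
  have hcosP : 0 < Real.cos Pp := by
    have := hga
    rw [hgA a, show a - A = -Pp by rw [hPdef]; ring, Real.cos_neg] at this
    nlinarith
  have hPQ : Pp + Q = b - a := by rw [hPdef, hQdef]; ring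
  have hPlow : -(π/2) < Pp := by
    have h1 : 0 ≤ b - a := by linarith
    have h2 : Q < π/2 := (abs_lt.mp hQabs).2
    linarith
  have hPhigh : Pp < π/2 := by
    by_contra hcc
    push_neg at hcc
    have h1 : Pp ≤ π + π/2 := by
      have h2 : -(π/2) < Q := (abs_lt.mp hQabs).1
      linarith
    linarith [Real.cos_nonpos_of_pi_div_two_le_of_le hcc h1]
  -- the invariance inequality at b
  have hvmem : v ∈ P := by
    rw [hP]
    exact subset_convexHull ℝ _ (Set.mem_range_self j)
  have htv : t * v ∈ P := hinv v hvmem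
  have hineq : (t*v).re * Real.cos b + (t*v).im * Real.sin b ≤ gfun p j b := by
    apply hull_bound hA2
    rwa [← hP]
  have hvreA : v.re = ‖v‖ * Real.cos A := by
    rw [hA, Real.cos_add_int_mul_two_pi, Complex.norm_mul_cos_arg]
  have hvimA : v.im = ‖v‖ * Real.sin A := by
    rw [hA, Real.sin_add_int_mul_two_pi, Complex.norm_mul_sin_arg]
  have hcalc : (t*v).re * Real.cos b + (t*v).im * Real.sin b
      = t.re * (‖v‖ * Real.cos Q) + t.im * (‖v‖ * Real.sin Q) := by
    rw [Complex.mul_re, Complex.mul_im, hvreA, hvimA,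
      show Q = b - A from rfl, Real.cos_sub, Real.sin_sub]
    ring
  have hineq2 : t.im * Real.sin Q ≤ (1 - t.re) * Real.cos Q := by
    rw [hcalc, hgA b, show b - A = Q from rfl] at hineq
    nlinarith
  have hQη : Q ≤ η := by
    by_contra hcc
    push_neg at hcc
    have h1 : Real.sin Q ≤ ((1 - t.re)/t.im) * Real.cos Q := by
      rw [div_mul_eq_mul_div, le_div_iff₀ him]
      nlinarith
    have h2 : ((1 - t.re)/t.im) * Real.cos Q ≤ |(1 - t.re)/t.im| * Real.cos Q :=
      mul_le_mul_of_nonneg_right (le_abs_self _) (le_of_lt hcosQ)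
    have h3 : Real.tan Q ≤ Real.tan η := by
      rw [Real.tan_eq_sin_div_cos, div_le_iff₀ hcosQ, htanη]
      linarith
    have h4 : Real.tan η < Real.tan Q :=
      Real.tan_lt_tan_of_lt_of_lt_pi_div_two (by linarith) (abs_lt.mp hQabs).2 hcc
    linarith
  refine ⟨(Pp, Q), abs_lt.mpr ⟨hPlow, hPhigh⟩, hQabs, hQη, hPQ, ?_, ?_⟩
  · rw [hgA a, show a - A = -Pp by rw [hPdef]; ring, Real.cos_neg,
      Real.log_mul (ne_of_gt hvabs) (ne_of_gt hcosP)]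
  · rw [hgA b, show b - A = Q from rfl,
      Real.log_mul (ne_of_gt hvabs) (ne_of_gt hcosQ)]

lemma key {M : ℕ} (p : Fin M → ℂ) (P : Set ℂ) (hP : P = convexHull ℝ (Set.range p))
    (hint : (interior P).Nonempty) (t : ℂ) (him : 0 < t.im) (htre : 0 < t.re)
    (hinv : ∀ z ∈ P, t * z ∈ P) (η : ℝ) (hη : η = |Real.arctan ((1 - t.re) / t.im)|)
    (hη1 : η ≤ 1) : 2 * Real.pi / (3 * η) ≤ (M : ℝ) := by
  have hπ3 : (3:ℝ) < π := Real.pi_gt_three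
  have hηnn : 0 ≤ η := hη ▸ abs_nonneg _
  rcases eq_or_lt_of_le hηnn with hζ | hη0
  · rw [← hζ, mul_zero, div_zero]
    exact Nat.cast_nonneg M
  have hη2 : η < π/2 := by linarith
  have htanη : Real.tan η = |(1 - t.re)/t.im| := by rw [hη]; exact tan_abs_arctan _
  have hM : 0 < M := by
    by_contra hc
    push_neg at hc
    interval_cases M
    have hre : Set.range p = ∅ := Set.range_eq_empty p
    rw [hP, hre, convexHull_empty] at hint
    simp at hint
  have hpos := support_pos hP hint him htre hinv
  obtain ⟨N, s, idx, hN1, hNM, hs0, hmono, hwidth, hact, hNlt, hNge⟩ := act_seq hM hpos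
  set emin : ℕ → ℝ := fun i => min (s (i+1)) (2*π) with hemin
  have hfacts : ∀ i, i < N → s i ≤ emin i ∧ emin i - s i < π ∧
      Act p (idx i) (s i) ∧ Act p (idx i) (emin i) := by
    intro i hi
    have h1 : s i < 2*π := hNlt i hi
    have h2 : s i ≤ emin i := le_min (le_of_lt (hmono i)) (le_of_lt h1)
    have h3 : emin i ≤ s (i+1) := min_le_left _ _
    exact ⟨h2, by linarith [hwidth i], hact i (s i) le_rfl (le_of_lt (hmono i)),
      hact i (emin i) h2 h3⟩
  have harc : ∀ i : ℕ, ∃ PQ : ℝ × ℝ, i < N →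
      (|PQ.1| < π/2 ∧ |PQ.2| < π/2 ∧ PQ.2 ≤ η ∧ PQ.1 + PQ.2 = emin i - s i ∧
       Real.log (gfun p (idx i) (s i))
         = Real.log (‖p (idx i)‖) + Real.log (Real.cos PQ.1) ∧
       Real.log (gfun p (idx i) (emin i))
         = Real.log (‖p (idx i)‖) + Real.log (Real.cos PQ.2)) := by
    intro i
    by_cases hi : i < N
    · obtain ⟨h2, h4, hA1, hA2⟩ := hfacts i hi
      obtain ⟨PQ, c1, c2, c3, c4, c5, c6⟩ :=
        arc_data hP him hinv hη2 hηnn htanη h2 h4 hA1 hA2 (hpos _ _ hA1) (hpos _ _ hA2)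
      exact ⟨PQ, fun _ => ⟨c1, c2, c3, c4, c5, c6⟩⟩
    · exact ⟨(0,0), fun h => absurd h hi⟩
  choose F hF using harc
  set pp : ℕ → ℝ := fun i => (F i).1 with hpp
  set qq : ℕ → ℝ := fun i => (F i).2 with hqq
  obtain ⟨K, hK⟩ : ∃ K, N = K + 1 := ⟨N-1, by omega⟩
  have hsum : ∑ i ∈ Finset.range N, (pp i + qq i) = 2*π := by
    have h1 : ∀ i ∈ Finset.range N, pp i + qq i = emin i - s i := by
      intro i hi
      exact (hF i (Finset.mem_range.mp hi)).2.2.2.1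
    rw [Finset.sum_congr rfl h1, hK, Finset.sum_range_succ]
    have h2 : ∀ i ∈ Finset.range K, emin i - s i = s (i+1) - s i := by
      intro i hi
      have hik := Finset.mem_range.mp hi
      have hlt : s (i+1) < 2*π := hNlt (i+1) (by omega)
      have : emin i = s (i+1) := min_eq_left (le_of_lt hlt)
      rw [this]
    have h3 : emin K = 2*π := by
      have hKe : 2*π ≤ s (K+1) := by rw [← hK]; exact hNge
      simp only [hemin]
      exact min_eq_right hKe
    rw [Finset.sum_congr rfl h2, Finset.sum_range_sub (fun i => s i), h3, hs0]
    ring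
  have hlog : ∑ i ∈ Finset.range N, Real.log (Real.cos (pp i))
      = ∑ i ∈ Finset.range N, Real.log (Real.cos (qq i)) := by
    have hup : ∀ i ∈ Finset.range N, Real.log (Real.cos (pp i))
        = Real.log (gfun p (idx i) (s i)) - Real.log (‖p (idx i)‖) := by
      intro i hi
      have := (hF i (Finset.mem_range.mp hi)).2.2.2.2.1
      linarith
    have huq : ∀ i ∈ Finset.range N, Real.log (Real.cos (qq i))
        = Real.log (gfun p (idx i) (emin i)) - Real.log (‖p (idx i)‖) := by
      intro i hi
      have := (hF i (Finset.mem_range.mp hi)).2.2.2.2.2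
      linarith
    rw [Finset.sum_congr rfl hup, Finset.sum_congr rfl huq,
      Finset.sum_sub_distrib, Finset.sum_sub_distrib]
    have hmain : ∑ i ∈ Finset.range N, Real.log (gfun p (idx i) (s i))
        = ∑ i ∈ Finset.range N, Real.log (gfun p (idx i) (emin i)) := by
      have claim1 : ∀ i ∈ Finset.range K,
          Real.log (gfun p (idx i) (emin i)) = Real.log (gfun p (idx (i+1)) (s (i+1))) := by
        intro i hi
        have hiN : i < N := by rw [hK]; have := Finset.mem_range.mp hi; omega
        have hi1N : i + 1 < N := by rw [hK]; have := Finset.mem_range.mp hi; omega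
        have hlt : s (i+1) < 2*π := hNlt (i+1) hi1N
        have heq : emin i = s (i+1) := min_eq_left (le_of_lt hlt)
        rw [heq]
        congr 1
        exact act_eq (heq ▸ (hfacts i hiN).2.2.2) (hfacts (i+1) hi1N).2.2.1
      have claim2 : Real.log (gfun p (idx K) (emin K)) = Real.log (gfun p (idx 0) (s 0)) := by
        have hKN : K < N := by omega
        have h3 : emin K = 2*π := by
          have hKe : 2*π ≤ s (K+1) := by rw [← hK]; exact hNge
          simp only [hemin]
          exact min_eq_right hKe
        have hActK : Act p (idx K) (0 + 2*π) := by
          have := (hfacts K hKN).2.2.2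
          rw [h3] at this
          simpa using this
        have hActK0 : Act p (idx K) 0 := act_periodic hActK
        have hAct0 : Act p (idx 0) 0 := by
          have := (hfacts 0 (by omega)).2.2.1
          rwa [hs0] at this
        rw [h3, hs0, show (2*π : ℝ) = 0 + 2*π by ring, gfun_periodic]
        congr 1
        exact act_eq hActK0 hAct0
      rw [hK]
      rw [Finset.sum_range_succ' (fun i => Real.log (gfun p (idx i) (s i))) K]
      rw [Finset.sum_range_succ (fun i => Real.log (gfun p (idx i) (emin i))) K]
      rw [Finset.sum_congr rfl claim1, claim2]
    rw [hmain]
  have hpm : ∀ i < N, |pp i| < π/2 := fun i hi => (hF i hi).1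
  have hqm : ∀ i < N, |qq i| < π/2 := fun i hi => (hF i hi).2.1
  have hqη : ∀ i < N, qq i ≤ η := fun i hi => (hF i hi).2.2.1
  have hw : ∀ i < N, 0 ≤ pp i + qq i := by
    intro i hi
    rw [(hF i hi).2.2.2.1]
    linarith [(hfacts i hi).1]
  have hend := endgame hη0 hη1 pp qq hpm hqm hqη hw hsum hlog
  have hNM' : (N:ℝ) ≤ (M:ℝ) + 1 := by exact_mod_cast hNM
  have h2π : 2*π ≤ 2*((M:ℝ)+1)*η := by nlinarith
  rw [div_le_iff₀ (by positivity)]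
  nlinarith [Nat.cast_nonneg (α:=ℝ) M]

theorem invariant_polygon_side_bound
    (M : ℕ) (p : Fin M → ℂ)
    (P : Set ℂ) (hP : P = convexHull ℝ (Set.range p))
    (hint : (interior P).Nonempty)
    (h0 : (0 : ℂ) ∈ P)
    (t : ℂ) (htim : t.im ≠ 0) (htre : 0 < t.re)
    (hinv : ∀ z ∈ P, t * z ∈ P)
    (η : ℝ) (hη : η = |Real.arctan ((1 - t.re) / t.im)|) (hη1 : η ≤ 1) :
    2 * Real.pi / (3 * η) ≤ (M : ℝ) := by
  rcases lt_or_gt_of_ne htim with hneg | hposim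
  · -- conjugate everything
    set c : ℂ → ℂ := fun z => (starRingEnd ℂ) z with hc
    have hchom : ∀ z w : ℂ, c (z*w) = c z * c w := fun z w => map_mul _ z w
    set p' : Fin M → ℂ := fun j => c (p j) with hp'
    set P' : Set ℂ := c '' P with hP'
    have hlin : (⇑(Complex.conjLIE.toLinearEquiv.toLinearMap) : ℂ → ℂ) = c := by
      funext z
      rfl
    have hP'hull : P' = convexHull ℝ (Set.range p') := by
      rw [hP', hP, ← hlin, LinearMap.image_convexHull]
      congr 1
      rw [hlin]
      ext z
      constructor
      · rintro ⟨_, ⟨j, rfl⟩, rfl⟩; exact ⟨j, rfl⟩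
      · rintro ⟨j, rfl⟩; exact ⟨p j, ⟨j, rfl⟩, rfl⟩
    have hhomeo : (⇑(Complex.conjCLE.toHomeomorph) : ℂ → ℂ) = c := by
      funext z; rfl
    have hint' : (interior P').Nonempty := by
      obtain ⟨z₁, hz₁⟩ := hint
      refine ⟨c z₁, ?_⟩
      rw [hP', ← hhomeo, ← Homeomorph.image_interior]
      exact Set.mem_image_of_mem _ hz₁
    have hinv' : ∀ z ∈ P', (c t) * z ∈ P' := by
      rintro _ ⟨w, hw, rfl⟩
      rw [← hchom]
      exact Set.mem_image_of_mem _ (hinv w hw)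
    have him' : 0 < (c t).im := by
      rw [hc]
      simp only [Complex.conj_im]
      linarith
    have htre' : 0 < (c t).re := by
      rw [hc]
      simpa using htre
    have hη' : η = |Real.arctan ((1 - (c t).re) / (c t).im)| := by
      rw [hc]
      simp only [Complex.conj_re, Complex.conj_im]
      rw [div_neg, Real.arctan_neg, abs_neg]
      exact hη
    exact key p' P' hP'hull hint' (c t) him' htre' hinv' η hη' hη1
  · exact key p P hP hint t hposim htre hinv η hη hη1
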